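/- For j = 1, 2, let μ_j ∈ M(𝕋^{d_j}), let Λ_j ⊂ ℤ^{d_j} be a finite subset, and let ν_j ∈ 𝓔(μ_j, Λ_j). Then ε(μ_1 × μ_2, Λ_1 × Λ_2) = ε(μ_1, Λ_1) · ε(μ_2, Λ_2), and the product measure ν_1 × ν_2 belongs to 𝓔(μ_1 × μ_2, Λ_1 × Λ_2). -/

import Mathlib

/- Setting: `M(𝕋^d)`, the space of complex bounded Radon measures on the `d`-dimensional
torus, is identified with the continuous dual of `C(𝕋^d, ℂ)` via the Riesz representation
theorem; the total variation norm corresponds to the operator norm. -/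

open MeasureTheory Complex Real

noncomputable section

attribute [local instance] ZeroLEOneClass.factZeroLtOne

/-- The `d`-dimensional torus `𝕋^d = (ℝ/ℤ)^d`. -/
abbrev Torus (d : ℕ) : Type := Fin d → AddCircle (1 : ℝ)

/-- The character `x ↦ e^{2πi m·x}` on the torus, for `m ∈ ℤ^d`. -/
def torusChar {d : ℕ} (m : Fin d → ℤ) : C(Torus d, ℂ) :=
  ⟨fun x => ∏ i, fourier (m i) (x i), by
    refine continuous_finsetProd _ fun i _ => ?_
    exact (map_continuous (fourier (m i))).comp (continuous_apply i)⟩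

/-- The space `M(𝕋^d)` of complex bounded Radon measures on the torus, identified (via the
Riesz representation theorem) with the continuous dual of `C(𝕋^d, ℂ)`; the total variation
norm is the operator norm. -/
abbrev TorusMeasure (d : ℕ) : Type := C(Torus d, ℂ) →L[ℂ] ℂ

/-- The Fourier coefficient `μ̂(m) = ∫_{𝕋^d} e^{-2πi m·x} dμ(x)`. -/
def mFourierCoeff {d : ℕ} (μ : TorusMeasure d) (m : Fin d → ℤ) : ℂ :=
  μ (torusChar (-m))

/-- `ν` is an extrapolation of `μ` from `Λ` if `ν̂ = μ̂` on `Λ`. -/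
def IsExtrapolation {d : ℕ} (μ : TorusMeasure d) (Λ : Finset (Fin d → ℤ))
    (ν : TorusMeasure d) : Prop :=
  ∀ m ∈ Λ, mFourierCoeff ν m = mFourierCoeff μ m

/-- `ε(μ,Λ) = inf {‖σ‖ : σ ∈ M(𝕋^d), σ̂ = μ̂ on Λ}`. -/
def minExtNorm {d : ℕ} (μ : TorusMeasure d) (Λ : Finset (Fin d → ℤ)) : ℝ :=
  sInf ((fun ν => ‖ν‖) '' {ν | IsExtrapolation μ Λ ν})

/-- `ν` is a minimal extrapolation of `μ` from `Λ`, i.e. `ν ∈ 𝓔(μ,Λ)`: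
an extrapolation whose total variation norm equals `ε(μ,Λ)`. -/
def IsMinimalExtrapolation {d : ℕ} (μ : TorusMeasure d) (Λ : Finset (Fin d → ℤ))
    (ν : TorusMeasure d) : Prop :=
  IsExtrapolation μ Λ ν ∧ ‖ν‖ = minExtNorm μ Λ

/-- `Γ(μ,Λ) = {m ∈ Λ : |μ̂(m)| = ε(μ,Λ)}`. -/
def gammaSet {d : ℕ} (μ : TorusMeasure d) (Λ : Finset (Fin d → ℤ)) : Set (Fin d → ℤ) :=
  {m | m ∈ Λ ∧ ‖mFourierCoeff μ m‖ = minExtNorm μ Λ}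

/-- The measure `ν` is supported in the set `S`: it annihilates every continuous
function vanishing on `S` (for closed `S` this says `supp(ν) ⊆ S`). -/
def SupportedIn {d : ℕ} (ν : TorusMeasure d) (S : Set (Torus d)) : Prop :=
  ∀ f : C(Torus d, ℂ), (∀ x ∈ S, f x = 0) → ν f = 0

/-- The pairing `⟨f,μ⟩ = ∫_{𝕋^d} f(x) conj(dμ(x)) = conj (μ (conj f))`. -/
def mPairing {d : ℕ} (f : C(Torus d, ℂ)) (μ : TorusMeasure d) : ℂ :=
  starRingEnd ℂ (μ (star f))

/-- `C(𝕋^d;Λ)`: the subspace of trigonometric polynomials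
`f(x) = ∑_{m ∈ Λ} a_m e^{2πi m·x}` with frequencies in `Λ`. -/
def trigPoly {d : ℕ} (Λ : Finset (Fin d → ℤ)) : Submodule ℂ C(Torus d, ℂ) :=
  Submodule.span ℂ (torusChar '' (Λ : Set (Fin d → ℤ)))

/-- For a continuous `g` with `‖g‖_∞ ≤ 1`, the assertion that `sign(ν) = g`
`ν`-almost everywhere, expressed through the standard equivalent condition
`⟨g,ν⟩ = ‖ν‖` (obtained by integrating the Radon–Nikodym identity
`∫ f d|ν| = ∫ f conj(sign ν) dν` against `f = conj g` and using `|ν|(𝕋^d) = ‖ν‖`). -/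
def SignEqAE {d : ℕ} (ν : TorusMeasure d) (g : C(Torus d, ℂ)) : Prop :=
  mPairing g ν = (‖ν‖ : ℂ)

/-- `ν` is a positive measure: it takes nonnegative real values on nonnegative real-valued
continuous functions. -/
def IsPositiveMeasure {d : ℕ} (ν : TorusMeasure d) : Prop :=
  ∀ f : C(Torus d, ℂ), (∀ x, (f x).im = 0 ∧ 0 ≤ (f x).re) → (ν f).im = 0 ∧ 0 ≤ (ν f).re

/-- The Dirac measure `δ_x`: evaluation at `x`. -/
def diracM {d : ℕ} (x : Torus d) : TorusMeasure d :=
  ContinuousMap.evalCLM ℂ x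

/-- The modulation `M_n ν`, defined by `d(M_n ν)(x) = e^{2πi n·x} dν(x)`. -/
def modulateM {d : ℕ} (n : Fin d → ℤ) (ν : TorusMeasure d) : TorusMeasure d :=
  ν.comp (ContinuousLinearMap.mul ℂ C(Torus d, ℂ) (torusChar n))

/-- Concatenation `𝕋^{d₁} × 𝕋^{d₂} → 𝕋^{d₁+d₂}` as a continuous map. -/
def torusAppend (d₁ d₂ : ℕ) : C(Torus d₁ × Torus d₂, Torus (d₁ + d₂)) :=
  ⟨fun p => Fin.append p.1 p.2, by
    refine continuous_pi fun i => ?_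
    refine Fin.addCases (motive := fun i => Continuous fun p : Torus d₁ × Torus d₂ =>
      Fin.append p.1 p.2 i) (fun j => ?_) (fun j => ?_) i
    · simp only [Fin.append_left]
      exact (continuous_apply j).comp continuous_fst
    · simp only [Fin.append_right]
      exact (continuous_apply j).comp continuous_snd⟩

/-- The product measure `μ₁ × μ₂ ∈ M(𝕋^{d₁+d₂})`, defined on the dual side by
`(μ₁ × μ₂)(f) = μ₁ (x ↦ μ₂ (y ↦ f(x,y)))`. It satisfies
`(μ₁ × μ₂)^(m₁,m₂) = μ̂₁(m₁) μ̂₂(m₂)` and `‖μ₁ × μ₂‖ = ‖μ₁‖ ‖μ₂‖`. -/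
def prodM {d₁ d₂ : ℕ} (μ₁ : TorusMeasure d₁) (μ₂ : TorusMeasure d₂) :
    TorusMeasure (d₁ + d₂) :=
  LinearMap.mkContinuous
    { toFun := fun f => μ₁ ((⟨⇑μ₂, μ₂.continuous⟩ : C(C(Torus d₂, ℂ), ℂ)).comp
        ((f.comp (torusAppend d₁ d₂)).curry))
      map_add' := fun f g => by
        have h : ((f + g).comp (torusAppend d₁ d₂)).curry =
            (f.comp (torusAppend d₁ d₂)).curry + (g.comp (torusAppend d₁ d₂)).curry := by
          ext x y
          rfl
        show μ₁ _ = μ₁ _ + μ₁ _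
        rw [h, ← map_add μ₁]
        congr 1
        ext x
        exact map_add μ₂ _ _
      map_smul' := fun c f => by
        have h : ((c • f).comp (torusAppend d₁ d₂)).curry =
            c • (f.comp (torusAppend d₁ d₂)).curry := by
          ext x y
          rfl
        simp only [RingHom.id_apply]
        show μ₁ _ = c • μ₁ _
        rw [h, ← _root_.map_smul μ₁]
        congr 1
        ext x
        exact _root_.map_smul μ₂ _ _ }
    (‖μ₁‖ * ‖μ₂‖) (fun f => by
      simp only [LinearMap.coe_mk, AddHom.coe_mk]
      have h2 : ∀ x : Torus d₁, ‖((f.comp (torusAppend d₁ d₂)).curry) x‖ ≤ ‖f‖ :=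
        fun x => (ContinuousMap.norm_le _ (norm_nonneg f)).mpr fun y =>
          f.norm_coe_le_norm _
      have h1 : ‖(⟨⇑μ₂, μ₂.continuous⟩ : C(C(Torus d₂, ℂ), ℂ)).comp
          ((f.comp (torusAppend d₁ d₂)).curry)‖ ≤ ‖μ₂‖ * ‖f‖ := by
        refine (ContinuousMap.norm_le _ (by positivity)).mpr fun x => ?_
        calc ‖μ₂ (((f.comp (torusAppend d₁ d₂)).curry) x)‖
            ≤ ‖μ₂‖ * ‖((f.comp (torusAppend d₁ d₂)).curry) x‖ := μ₂.le_opNorm _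
          _ ≤ ‖μ₂‖ * ‖f‖ := mul_le_mul_of_nonneg_left (h2 x) (norm_nonneg μ₂)
      calc ‖μ₁ _‖ ≤ ‖μ₁‖ * ‖(⟨⇑μ₂, μ₂.continuous⟩ : C(C(Torus d₂, ℂ), ℂ)).comp
            ((f.comp (torusAppend d₁ d₂)).curry)‖ := μ₁.le_opNorm _
        _ ≤ ‖μ₁‖ * (‖μ₂‖ * ‖f‖) := mul_le_mul_of_nonneg_left h1 (norm_nonneg μ₁)
        _ = ‖μ₁‖ * ‖μ₂‖ * ‖f‖ := by ring)

namespace MinExtAux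

variable {d d₁ d₂ : ℕ}

/-- The span of the characters `torusChar (-m)`, `m ∈ Λ`. -/
def negSpan (Λ : Finset (Fin d → ℤ)) : Submodule ℂ C(Torus d, ℂ) :=
  Submodule.span ℂ ((fun m => torusChar (-m)) '' (Λ : Set (Fin d → ℤ)))

instance negSpan_seminormedAddCommGroup (Λ : Finset (Fin d → ℤ)) :
    SeminormedAddCommGroup (negSpan Λ) :=
  (negSpan Λ).seminormedAddCommGroup

instance negSpan_normedSpace (Λ : Finset (Fin d → ℤ)) : NormedSpace ℂ (negSpan Λ) :=
  (negSpan Λ).normedSpace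

lemma ext_eqOn {μ σ : TorusMeasure d} {Λ : Finset (Fin d → ℤ)}
    (h : IsExtrapolation μ Λ σ) : ∀ f ∈ negSpan Λ, σ f = μ f := by
  intro f hf
  induction hf using Submodule.span_induction with
  | mem x hx =>
    obtain ⟨m, hm, rfl⟩ := hx
    exact h m hm
  | zero => simp
  | add x y _ _ hx hy => simp [hx, hy]
  | smul c x _ hx => simp [hx]

lemma extSet_nonempty (μ : TorusMeasure d) (Λ : Finset (Fin d → ℤ)) :
    ((fun ν => ‖ν‖) '' {ν | IsExtrapolation μ Λ ν}).Nonempty :=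
  ⟨‖μ‖, μ, fun _ _ => rfl, rfl⟩

lemma extSet_bdd (μ : TorusMeasure d) (Λ : Finset (Fin d → ℤ)) :
    BddBelow ((fun ν => ‖ν‖) '' {ν | IsExtrapolation μ Λ ν}) :=
  ⟨0, by rintro x ⟨ν, _, rfl⟩; exact norm_nonneg ν⟩

lemma minExtNorm_le {μ σ : TorusMeasure d} {Λ : Finset (Fin d → ℤ)}
    (h : IsExtrapolation μ Λ σ) : minExtNorm μ Λ ≤ ‖σ‖ :=
  csInf_le (extSet_bdd μ Λ) ⟨σ, h, rfl⟩

lemma norm_restrict_le {μ σ : TorusMeasure d} {Λ : Finset (Fin d → ℤ)}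
    (h : IsExtrapolation μ Λ σ) :
    ‖μ.comp (negSpan Λ).subtypeL‖ ≤ ‖σ‖ := by
  refine ContinuousLinearMap.opNorm_le_bound _ (norm_nonneg σ) fun x => ?_
  have hx : μ (x : C(Torus d, ℂ)) = σ x := (ext_eqOn h x x.2).symm
  simp only [ContinuousLinearMap.comp_apply, Submodule.subtypeL_apply, hx]
  exact σ.le_opNorm _

/-- Duality: `ε(μ,Λ)` equals the norm of the restriction of `μ` to the span of
the characters with frequencies in `-Λ`. -/
lemma minExtNorm_eq (μ : TorusMeasure d) (Λ : Finset (Fin d → ℤ)) :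
    minExtNorm μ Λ = ‖μ.comp (negSpan Λ).subtypeL‖ := by
  refine le_antisymm ?_ (le_csInf (extSet_nonempty μ Λ) ?_)
  · obtain ⟨g, hg, hnorm⟩ :=
      exists_extension_norm_eq (negSpan Λ) (μ.comp (negSpan Λ).subtypeL)
    have hext : IsExtrapolation μ Λ g := by
      intro m hm
      have hmem : torusChar (-m) ∈ negSpan Λ :=
        Submodule.subset_span ⟨m, hm, rfl⟩
      have := hg ⟨torusChar (-m), hmem⟩
      simpa [mFourierCoeff] using this
    exact (minExtNorm_le hext).trans hnorm.le
  · rintro x ⟨σ, hσ, rfl⟩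
    exact norm_restrict_le hσ

/-- The tensor product `f₁ ⊗ f₂` of continuous functions. -/
def tensorCM (f₁ : C(Torus d₁, ℂ)) (f₂ : C(Torus d₂, ℂ)) : C(Torus (d₁ + d₂), ℂ) :=
  ⟨fun z => f₁ (fun j => z (Fin.castAdd d₂ j)) * f₂ (fun j => z (Fin.natAdd d₁ j)),
    by
      apply Continuous.mul
      · exact f₁.continuous.comp (continuous_pi fun j => continuous_apply (Fin.castAdd d₂ j))
      · exact f₂.continuous.comp (continuous_pi fun j => continuous_apply (Fin.natAdd d₁ j))⟩

lemma tensorCM_apply (f₁ : C(Torus d₁, ℂ)) (f₂ : C(Torus d₂, ℂ)) (z : Torus (d₁ + d₂)) :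
    tensorCM f₁ f₂ z = f₁ (fun j => z (Fin.castAdd d₂ j)) * f₂ (fun j => z (Fin.natAdd d₁ j)) :=
  rfl

lemma norm_tensorCM_le (f₁ : C(Torus d₁, ℂ)) (f₂ : C(Torus d₂, ℂ)) :
    ‖tensorCM f₁ f₂‖ ≤ ‖f₁‖ * ‖f₂‖ := by
  refine (ContinuousMap.norm_le _ (by positivity)).mpr fun z => ?_
  rw [tensorCM_apply, norm_mul]
  exact mul_le_mul (f₁.norm_coe_le_norm _) (f₂.norm_coe_le_norm _) (norm_nonneg _)
    (norm_nonneg _)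

lemma tensorCM_char (m₁ : Fin d₁ → ℤ) (m₂ : Fin d₂ → ℤ) :
    tensorCM (torusChar m₁) (torusChar m₂) = torusChar (Fin.append m₁ m₂) := by
  ext z
  simp only [tensorCM_apply, torusChar, ContinuousMap.coe_mk]
  rw [Fin.prod_univ_add]
  congr 1
  · exact Finset.prod_congr rfl fun j _ => by rw [Fin.append_left]
  · exact Finset.prod_congr rfl fun j _ => by rw [Fin.append_right]

lemma neg_append (m₁ : Fin d₁ → ℤ) (m₂ : Fin d₂ → ℤ) :
    -(Fin.append m₁ m₂) = Fin.append (-m₁) (-m₂) := by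
  funext i
  refine Fin.addCases (motive := fun i => (-(Fin.append m₁ m₂)) i = Fin.append (-m₁) (-m₂) i)
    (fun j => ?_) (fun j => ?_) i
  · simp [Fin.append_left]
  · simp [Fin.append_right]

lemma prodM_tensorCM (a : TorusMeasure d₁) (b : TorusMeasure d₂)
    (f₁ : C(Torus d₁, ℂ)) (f₂ : C(Torus d₂, ℂ)) :
    prodM a b (tensorCM f₁ f₂) = a f₁ * b f₂ := by
  have hcurry : ∀ x : Torus d₁,
      (((tensorCM f₁ f₂).comp (torusAppend d₁ d₂)).curry) x = f₁ x • f₂ := by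
    intro x
    ext y
    show tensorCM f₁ f₂ (Fin.append x y) = f₁ x * f₂ y
    rw [tensorCM_apply]
    congr 1
    · congr 1; funext j; exact Fin.append_left x y j
    · congr 1; funext j; exact Fin.append_right x y j
  have h : (⟨⇑b, b.continuous⟩ : C(C(Torus d₂, ℂ), ℂ)).comp
      (((tensorCM f₁ f₂).comp (torusAppend d₁ d₂)).curry) = (b f₂) • f₁ := by
    ext x
    show b ((((tensorCM f₁ f₂).comp (torusAppend d₁ d₂)).curry) x) = b f₂ * f₁ x
    rw [hcurry x, _root_.map_smul, smul_eq_mul, mul_comm]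
  show a ((⟨⇑b, b.continuous⟩ : C(C(Torus d₂, ℂ), ℂ)).comp
      (((tensorCM f₁ f₂).comp (torusAppend d₁ d₂)).curry)) = a f₁ * b f₂
  rw [h, _root_.map_smul, smul_eq_mul, mul_comm]

lemma norm_prodM_le (a : TorusMeasure d₁) (b : TorusMeasure d₂) :
    ‖prodM a b‖ ≤ ‖a‖ * ‖b‖ :=
  LinearMap.mkContinuous_norm_le _ (by positivity) _

lemma mFourierCoeff_prodM (a : TorusMeasure d₁) (b : TorusMeasure d₂)
    (m₁ : Fin d₁ → ℤ) (m₂ : Fin d₂ → ℤ) :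
    mFourierCoeff (prodM a b) (Fin.append m₁ m₂) =
      mFourierCoeff a m₁ * mFourierCoeff b m₂ := by
  show prodM a b (torusChar (-(Fin.append m₁ m₂))) =
    a (torusChar (-m₁)) * b (torusChar (-m₂))
  rw [neg_append, ← tensorCM_char, prodM_tensorCM]

lemma tensorCM_add_left (f g : C(Torus d₁, ℂ)) (h : C(Torus d₂, ℂ)) :
    tensorCM (f + g) h = tensorCM f h + tensorCM g h := by
  ext z; simp [tensorCM_apply]; ring

lemma tensorCM_smul_left (c : ℂ) (f : C(Torus d₁, ℂ)) (h : C(Torus d₂, ℂ)) :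
    tensorCM (c • f) h = c • tensorCM f h := by
  ext z; simp [tensorCM_apply]; ring

lemma tensorCM_zero_left (h : C(Torus d₂, ℂ)) :
    tensorCM (0 : C(Torus d₁, ℂ)) h = 0 := by
  ext z; simp [tensorCM_apply]

lemma tensorCM_add_right (f : C(Torus d₁, ℂ)) (g h : C(Torus d₂, ℂ)) :
    tensorCM f (g + h) = tensorCM f g + tensorCM f h := by
  ext z; simp [tensorCM_apply]; ring

lemma tensorCM_smul_right (c : ℂ) (f : C(Torus d₁, ℂ)) (h : C(Torus d₂, ℂ)) :
    tensorCM f (c • h) = c • tensorCM f h := by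
  ext z; simp [tensorCM_apply]; ring

lemma tensorCM_zero_right (f : C(Torus d₁, ℂ)) :
    tensorCM f (0 : C(Torus d₂, ℂ)) = 0 := by
  ext z; simp [tensorCM_apply]

lemma sigma_tensor {σ : TorusMeasure (d₁ + d₂)} {μ₁ : TorusMeasure d₁}
    {μ₂ : TorusMeasure d₂} {Λ₁ : Finset (Fin d₁ → ℤ)} {Λ₂ : Finset (Fin d₂ → ℤ)}
    (h : ∀ m₁ ∈ Λ₁, ∀ m₂ ∈ Λ₂,
      σ (tensorCM (torusChar (-m₁)) (torusChar (-m₂))) =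
        μ₁ (torusChar (-m₁)) * μ₂ (torusChar (-m₂))) :
    ∀ f₁ ∈ negSpan Λ₁, ∀ f₂ ∈ negSpan Λ₂,
      σ (tensorCM f₁ f₂) = μ₁ f₁ * μ₂ f₂ := by
  intro f₁ hf₁
  induction hf₁ using Submodule.span_induction with
  | mem x hx =>
    obtain ⟨m₁, hm₁, rfl⟩ := hx
    intro f₂ hf₂
    induction hf₂ using Submodule.span_induction with
    | mem y hy =>
      obtain ⟨m₂, hm₂, rfl⟩ := hy
      exact h m₁ hm₁ m₂ hm₂
    | zero => simp [tensorCM_zero_right]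
    | add y z _ _ hy hz => simp [tensorCM_add_right, hy, hz]; ring
    | smul c y _ hy => simp [tensorCM_smul_right, hy]; ring
  | zero => intro f₂ _; simp [tensorCM_zero_left]
  | add x y _ _ hx hy =>
    intro f₂ hf₂
    simp [tensorCM_add_left, hx f₂ hf₂, hy f₂ hf₂]; ring
  | smul c x _ hx =>
    intro f₂ hf₂
    simp [tensorCM_smul_left, hx f₂ hf₂]; ring

end MinExtAux

/-- **Proposition 2.7(d).** The product of minimal extrapolations is a minimal extrapolation
for the product: `ε(μ₁ × μ₂, Λ₁ × Λ₂) = ε(μ₁,Λ₁) ε(μ₂,Λ₂)`, and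
`ν₁ × ν₂ ∈ 𝓔(μ₁ × μ₂, Λ₁ × Λ₂)` whenever `ν_j ∈ 𝓔(μ_j, Λ_j)`. -/
theorem minimalExtrapolation_prod {d₁ d₂ : ℕ} (μ₁ : TorusMeasure d₁)
    (μ₂ : TorusMeasure d₂) (Λ₁ : Finset (Fin d₁ → ℤ)) (Λ₂ : Finset (Fin d₂ → ℤ))
    (ν₁ : TorusMeasure d₁) (ν₂ : TorusMeasure d₂)
    (h₁ : IsMinimalExtrapolation μ₁ Λ₁ ν₁) (h₂ : IsMinimalExtrapolation μ₂ Λ₂ ν₂) :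
    minExtNorm (prodM μ₁ μ₂) ((Λ₁ ×ˢ Λ₂).image fun q => Fin.append q.1 q.2) =
      minExtNorm μ₁ Λ₁ * minExtNorm μ₂ Λ₂ ∧
    IsMinimalExtrapolation (prodM μ₁ μ₂)
      ((Λ₁ ×ˢ Λ₂).image fun q => Fin.append q.1 q.2) (prodM ν₁ ν₂) := by
  open MinExtAux in
  set Λ₁₂ := (Λ₁ ×ˢ Λ₂).image fun q : (Fin d₁ → ℤ) × (Fin d₂ → ℤ) =>
    Fin.append q.1 q.2 with hΛ₁₂
  -- the product of extrapolations is an extrapolation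
  have hext : IsExtrapolation (prodM μ₁ μ₂) Λ₁₂ (prodM ν₁ ν₂) := by
    intro m hm
    obtain ⟨q, hq, rfl⟩ := Finset.mem_image.mp hm
    obtain ⟨hq1, hq2⟩ := Finset.mem_product.mp hq
    rw [mFourierCoeff_prodM, mFourierCoeff_prodM, h₁.1 _ hq1, h₂.1 _ hq2]
  -- upper bound
  have hub : minExtNorm (prodM μ₁ μ₂) Λ₁₂ ≤ minExtNorm μ₁ Λ₁ * minExtNorm μ₂ Λ₂ := by
    calc minExtNorm (prodM μ₁ μ₂) Λ₁₂ ≤ ‖prodM ν₁ ν₂‖ := minExtNorm_le hext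
      _ ≤ ‖ν₁‖ * ‖ν₂‖ := norm_prodM_le ν₁ ν₂
      _ = minExtNorm μ₁ Λ₁ * minExtNorm μ₂ Λ₂ := by rw [h₁.2, h₂.2]
  -- lower bound
  have hlb : minExtNorm μ₁ Λ₁ * minExtNorm μ₂ Λ₂ ≤ minExtNorm (prodM μ₁ μ₂) Λ₁₂ := by
    rw [minExtNorm_eq μ₁ Λ₁, minExtNorm_eq μ₂ Λ₂]
    set r₁ := μ₁.comp (negSpan Λ₁).subtypeL with hr₁
    set r₂ := μ₂.comp (negSpan Λ₂).subtypeL with hr₂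
    refine le_csInf (extSet_nonempty _ _) ?_
    rintro x ⟨σ, hσ, rfl⟩
    have hten : ∀ f₁ ∈ negSpan Λ₁, ∀ f₂ ∈ negSpan Λ₂,
        σ (tensorCM f₁ f₂) = μ₁ f₁ * μ₂ f₂ := by
      refine sigma_tensor fun m₁ hm₁ m₂ hm₂ => ?_
      have hmem : Fin.append m₁ m₂ ∈ Λ₁₂ :=
        Finset.mem_image.mpr ⟨(m₁, m₂), Finset.mem_product.mpr ⟨hm₁, hm₂⟩, rfl⟩
      have hσm := hσ _ hmem
      rw [mFourierCoeff_prodM] at hσm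
      rw [tensorCM_char, ← neg_append]
      exact hσm
    have key : ∀ (x₁ : negSpan Λ₁) (x₂ : negSpan Λ₂),
        ‖μ₁ (x₁ : C(Torus d₁, ℂ))‖ * ‖μ₂ (x₂ : C(Torus d₂, ℂ))‖ ≤
          ‖σ‖ * ‖x₁‖ * ‖x₂‖ := by
      intro x₁ x₂
      rw [← norm_mul, ← hten _ x₁.2 _ x₂.2]
      calc ‖σ (tensorCM (x₁ : C(Torus d₁, ℂ)) (x₂ : C(Torus d₂, ℂ)))‖
          ≤ ‖σ‖ * ‖tensorCM (x₁ : C(Torus d₁, ℂ)) (x₂ : C(Torus d₂, ℂ))‖ :=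
            σ.le_opNorm _
        _ ≤ ‖σ‖ * (‖x₁‖ * ‖x₂‖) :=
            mul_le_mul_of_nonneg_left (norm_tensorCM_le _ _) (norm_nonneg σ)
        _ = ‖σ‖ * ‖x₁‖ * ‖x₂‖ := by ring
    have step1 : ∀ x₁ : negSpan Λ₁,
        ‖μ₁ (x₁ : C(Torus d₁, ℂ))‖ * ‖r₂‖ ≤ ‖σ‖ * ‖x₁‖ := by
      intro x₁
      rcases eq_or_lt_of_le (norm_nonneg (μ₁ (x₁ : C(Torus d₁, ℂ)))) with h0 | h0
      · rw [← h0, zero_mul]; positivity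
      · have hb : ‖r₂‖ ≤ ‖σ‖ * ‖x₁‖ / ‖μ₁ (x₁ : C(Torus d₁, ℂ))‖ := by
          refine ContinuousLinearMap.opNorm_le_bound _ (by positivity) fun x₂ => ?_
          rw [div_mul_eq_mul_div, le_div_iff₀ h0]
          have hr : r₂ x₂ = μ₂ (x₂ : C(Torus d₂, ℂ)) := rfl
          calc ‖r₂ x₂‖ * ‖μ₁ (x₁ : C(Torus d₁, ℂ))‖
              = ‖μ₁ (x₁ : C(Torus d₁, ℂ))‖ * ‖μ₂ (x₂ : C(Torus d₂, ℂ))‖ := by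
                rw [hr, mul_comm]
            _ ≤ ‖σ‖ * ‖x₁‖ * ‖x₂‖ := key x₁ x₂
        calc ‖μ₁ (x₁ : C(Torus d₁, ℂ))‖ * ‖r₂‖
            ≤ ‖μ₁ (x₁ : C(Torus d₁, ℂ))‖ *
              (‖σ‖ * ‖x₁‖ / ‖μ₁ (x₁ : C(Torus d₁, ℂ))‖) :=
              mul_le_mul_of_nonneg_left hb (norm_nonneg _)
          _ = ‖σ‖ * ‖x₁‖ := mul_div_cancel₀ _ (ne_of_gt h0)
    have step2 : ‖r₁‖ * ‖r₂‖ ≤ ‖σ‖ := by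
      rcases eq_or_lt_of_le (norm_nonneg r₂) with h0 | h0
      · rw [← h0, mul_zero]; exact norm_nonneg σ
      · have hb : ‖r₁‖ ≤ ‖σ‖ / ‖r₂‖ := by
          refine ContinuousLinearMap.opNorm_le_bound _ (by positivity) fun x₁ => ?_
          rw [div_mul_eq_mul_div, le_div_iff₀ h0]
          have hr : r₁ x₁ = μ₁ (x₁ : C(Torus d₁, ℂ)) := rfl
          rw [hr]
          exact step1 x₁
        calc ‖r₁‖ * ‖r₂‖ ≤ ‖σ‖ / ‖r₂‖ * ‖r₂‖ :=
              mul_le_mul_of_nonneg_right hb (norm_nonneg r₂)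
          _ = ‖σ‖ := div_mul_cancel₀ _ (ne_of_gt h0)
    exact step2
  have heq : minExtNorm (prodM μ₁ μ₂) Λ₁₂ = minExtNorm μ₁ Λ₁ * minExtNorm μ₂ Λ₂ :=
    le_antisymm hub hlb
  refine ⟨heq, hext, le_antisymm ?_ ?_⟩
  · calc ‖prodM ν₁ ν₂‖ ≤ ‖ν₁‖ * ‖ν₂‖ := norm_prodM_le ν₁ ν₂
      _ = minExtNorm μ₁ Λ₁ * minExtNorm μ₂ Λ₂ := by rw [h₁.2, h₂.2]
      _ = minExtNorm (prodM μ₁ μ₂) Λ₁₂ := heq.symm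
  · exact minExtNorm_le hext

end
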